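/- Let K be a number field with ring of integers O_K, and let ω, η ∈ O_K be such that ω² − 4η generates a squarefree ideal that is relatively prime to 2, and such that h = X² − ωX + η is irreducible over K. Let α be a root of h and L = K(α). Then the ring of integers of L equals O_K[α]. -/

import Mathlib

open NumberField Polynomial

/-- If `ω² − 4η` is squarefree and relatively prime to `2`, `h = X² − ωX + η` is irreducible
over `K` with root `α`, and `L = K(α)`, then the ring of integers of `L` is `𝓞 K[α]`. -/
theorem ringOfIntegers_eq_adjoin_root {K L : Type*} [Field K] [NumberField K]
    [Field L] [NumberField L] [Algebra K L] [Algebra (𝓞 K) L] [IsScalarTower (𝓞 K) K L]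
    (ω η : 𝓞 K)
    (hsq : Squarefree (Ideal.span {ω ^ 2 - 4 * η} : Ideal (𝓞 K)))
    (hcop : (Ideal.span {ω ^ 2 - 4 * η} : Ideal (𝓞 K)) ⊔ Ideal.span {(2 : 𝓞 K)} = ⊤)
    (hirr : Irreducible
      (X ^ 2 - C (algebraMap (𝓞 K) K ω) * X + C (algebraMap (𝓞 K) K η)))
    (α : L)
    (hroot : aeval α
      (X ^ 2 - C (algebraMap (𝓞 K) K ω) * X + C (algebraMap (𝓞 K) K η)) = 0)
    (hgen : IntermediateField.adjoin K {α} = ⊤) :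
    Algebra.adjoin (𝓞 K) {α} = integralClosure (𝓞 K) L := by
  have hmonic' : (X ^ 2 - C (algebraMap (𝓞 K) K ω) * X + C (algebraMap (𝓞 K) K η)).Monic := by
    monicity!
  have hαK : IsIntegral K α := ⟨_, hmonic', hroot⟩
  have hminα : minpoly K α = X ^ 2 - C (algebraMap (𝓞 K) K ω) * X + C (algebraMap (𝓞 K) K η) :=
    (minpoly.eq_of_irreducible_of_monic hirr hroot hmonic').symm
  have hαR : IsIntegral (𝓞 K) α := by
    refine ⟨X ^ 2 - C ω * X + C η, by monicity!, ?_⟩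
    have h2 := hroot
    have hmapd : (X ^ 2 - C (algebraMap (𝓞 K) K ω) * X + C (algebraMap (𝓞 K) K η))
        = (X ^ 2 - C ω * X + C η : (𝓞 K)[X]).map (algebraMap (𝓞 K) K) := by
      simp [Polynomial.map_add, Polynomial.map_sub, Polynomial.map_pow, Polynomial.map_mul]
    rw [hmapd, aeval_map_algebraMap, aeval_def] at h2
    exact h2
  have halg : Algebra.adjoin K {α} = ⊤ := by
    have h3 := IntermediateField.adjoin_simple_toSubalgebra_of_isAlgebraic hαK.isAlgebraic
    rw [hgen, IntermediateField.top_toSubalgebra] at h3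
    exact h3.symm
  have hdecomp : ∀ z : L, ∃ u v : K, z = algebraMap K L u + algebraMap K L v * α := by
    intro z
    have hz : z ∈ Algebra.adjoin K {α} := by rw [halg]; trivial
    rw [Algebra.adjoin_singleton_eq_range_aeval] at hz
    obtain ⟨p, hp⟩ := hz
    have hmm : (minpoly K α).Monic := minpoly.monic hαK
    have key : z = aeval α (p %ₘ minpoly K α) := by
      conv_lhs => rw [← hp, ← modByMonic_add_div p (minpoly K α)]
      simp [minpoly.aeval]
    have hdeg : (p %ₘ minpoly K α).degree ≤ 1 := by
      have h2 : (minpoly K α).degree = 2 := by rw [hminα]; compute_degree!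
      have h3 := degree_modByMonic_lt p hmm
      rw [h2] at h3
      exact Order.le_of_lt_succ (by exact_mod_cast h3)
    refine ⟨(p %ₘ minpoly K α).coeff 0, (p %ₘ minpoly K α).coeff 1, ?_⟩
    conv_lhs => rw [key, eq_X_add_C_of_degree_le_one hdeg]
    simp [map_add, map_mul, aeval_X, aeval_C]
    ring
  -- the relation satisfied by α
  have hα2 : α ^ 2 = algebraMap K L (algebraMap (𝓞 K) K ω) * α
      - algebraMap K L (algebraMap (𝓞 K) K η) := by
    have h2 := hroot
    simp only [map_add, map_sub, map_mul, map_pow, aeval_X, aeval_C] at h2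
    linear_combination h2
  refine le_antisymm (adjoin_le_integralClosure hαR) ?_
  intro x hx
  replace hx : IsIntegral (𝓞 K) x := hx
  by_cases hxK : x ∈ (algebraMap K L).range
  · obtain ⟨k, hk⟩ := hxK
    have hkint : IsIntegral (𝓞 K) k := by
      rw [← isIntegral_algebraMap_iff (algebraMap K L).injective] at *
      rwa [hk]
    obtain ⟨k₀, hk₀⟩ := IsIntegrallyClosed.isIntegral_iff.mp hkint
    have : x = algebraMap (𝓞 K) L k₀ := by
      rw [← hk, ← hk₀, IsScalarTower.algebraMap_apply (𝓞 K) K L]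
    rw [this]
    exact Subalgebra.algebraMap_mem _ k₀
  · obtain ⟨u, v, hx_eq⟩ := hdecomp x
    set t : K := 2 * u + v * algebraMap (𝓞 K) K ω with ht_def
    set n : K := u ^ 2 + u * v * algebraMap (𝓞 K) K ω + v ^ 2 * algebraMap (𝓞 K) K η with hn_def
    have hq : aeval x (X ^ 2 - C t * X + C n) = 0 := by
      simp only [map_add, map_sub, map_mul, map_pow, aeval_X, aeval_C, hx_eq, ht_def, hn_def,
        map_ofNat]
      linear_combination (algebraMap K L v) ^ 2 * hα2
    have hq_monic : (X ^ 2 - C t * X + C n).Monic := by monicity!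
    have hxintK : IsIntegral K x := hx.tower_top
    have hm_dvd : minpoly K x ∣ X ^ 2 - C t * X + C n := minpoly.dvd K x hq
    have hqd : (X ^ 2 - C t * X + C n).natDegree = 2 := by compute_degree!
    have hm2 : (minpoly K x).natDegree = 2 := by
      have h1 : (minpoly K x).natDegree ≤ 2 := hqd ▸ natDegree_le_of_dvd hm_dvd hq_monic.ne_zero
      have h2 : 0 < (minpoly K x).natDegree := minpoly.natDegree_pos hxintK
      have h3 : (minpoly K x).natDegree ≠ 1 := fun hd => hxK (minpoly.natDegree_eq_one_iff.mp hd)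
      omega
    have heq : minpoly K x = X ^ 2 - C t * X + C n := by
      obtain ⟨c, hc⟩ := hm_dvd
      have hc0 : c ≠ 0 := by
        rintro rfl
        rw [mul_zero] at hc
        exact hq_monic.ne_zero hc
      have hnc : c.natDegree = 0 := by
        have h4 := hc ▸ natDegree_mul (minpoly.ne_zero hxintK) hc0
        omega
      have hcC : c = C (c.coeff 0) := eq_C_of_natDegree_eq_zero hnc
      have hlc : (1 : K) = c.coeff 0 := by
        have := hq_monic.leadingCoeff
        rw [hc, hcC, leadingCoeff_mul, (minpoly.monic hxintK).leadingCoeff, one_mul,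
          leadingCoeff_C] at this
        exact this.symm
      rw [hc, hcC, ← hlc, map_one, mul_one]
    have hmap : (X ^ 2 - C t * X + C n)
        = (minpoly (𝓞 K) x).map (algebraMap (𝓞 K) K) := by
      rw [← heq, minpoly.isIntegrallyClosed_eq_field_fractions' K hx]
    have ht0 : algebraMap (𝓞 K) K (-(minpoly (𝓞 K) x).coeff 1) = t := by
      have h5 := congrArg (fun p => Polynomial.coeff p 1) hmap
      simp only [coeff_add, coeff_sub, coeff_X_pow, coeff_C_mul, coeff_X, coeff_C,
        coeff_map] at h5
      norm_num at h5
      rw [map_neg, ← h5]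
      ring
    have hn0 : algebraMap (𝓞 K) K ((minpoly (𝓞 K) x).coeff 0) = n := by
      have h5 := congrArg (fun p => Polynomial.coeff p 0) hmap
      simp only [coeff_add, coeff_sub, coeff_X_pow, coeff_C_mul, coeff_X, coeff_C,
        coeff_map] at h5
      norm_num at h5
      exact h5.symm
    set t₀ : 𝓞 K := -(minpoly (𝓞 K) x).coeff 1 with ht₀
    set n₀ : 𝓞 K := (minpoly (𝓞 K) x).coeff 0 with hn₀
    set d : 𝓞 K := ω ^ 2 - 4 * η with hd_def
    have hkey : algebraMap (𝓞 K) K d * v ^ 2 = t ^ 2 - 4 * n := by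
      simp only [hd_def, map_sub, map_mul, map_pow, map_ofNat, ht_def, hn_def]
      ring
    have hw2 : (algebraMap (𝓞 K) K d * v) ^ 2
        = algebraMap (𝓞 K) K (d * (t₀ ^ 2 - 4 * n₀)) := by
      have h8 : algebraMap (𝓞 K) K (t₀ ^ 2 - 4 * n₀) = t ^ 2 - 4 * n := by
        rw [map_sub, map_mul, map_pow, map_ofNat, ht0, hn0]
      rw [map_mul, h8]
      linear_combination algebraMap (𝓞 K) K d * hkey
    have hwint : IsIntegral (𝓞 K) (algebraMap (𝓞 K) K d * v) := by
      refine ⟨X ^ 2 - C (d * (t₀ ^ 2 - 4 * n₀)), by monicity!, ?_⟩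
      rw [← aeval_def]
      simp only [map_sub, map_pow, aeval_X, aeval_C]
      rw [hw2]
      ring
    obtain ⟨e, he⟩ := IsIntegrallyClosed.isIntegral_iff.mp hwint
    have τinj : Function.Injective (algebraMap (𝓞 K) K) := IsFractionRing.injective (𝓞 K) K
    have he2 : e ^ 2 = d * (t₀ ^ 2 - 4 * n₀) := by
      apply τinj
      rw [map_pow, he, hw2]
    have hdvd_e2 : d ∣ e ^ 2 := ⟨t₀ ^ 2 - 4 * n₀, he2⟩
    have hde : d ∣ e := by
      have hrad : IsRadical (Ideal.span {d} : Ideal (𝓞 K)) := hsq.isRadical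
      have h1 : Ideal.span {d} ∣ Ideal.span {e} ^ 2 := by
        rw [Ideal.span_singleton_pow, Ideal.dvd_iff_le, Ideal.span_singleton_le_span_singleton]
        exact hdvd_e2
      have h2 := hrad 2 (Ideal.span {e}) h1
      rwa [Ideal.dvd_iff_le, Ideal.span_singleton_le_span_singleton] at h2
    obtain ⟨f, hf⟩ := hde
    have hd0 : d ≠ 0 := by
      intro hc
      rw [hc, Ideal.span_singleton_eq_bot.mpr rfl] at hsq
      exact not_squarefree_zero hsq
    have hv : v = algebraMap (𝓞 K) K f := by
      have h6 : algebraMap (𝓞 K) K d * v = algebraMap (𝓞 K) K d * algebraMap (𝓞 K) K f := by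
        rw [← map_mul, ← hf, ← he]
      exact mul_left_cancel₀ (fun hc => hd0 (τinj (by rw [hc, map_zero]))) h6
    have huint : IsIntegral (𝓞 K) (algebraMap K L u) := by
      have h7 : algebraMap K L u = x - algebraMap (𝓞 K) L f * α := by
        rw [hx_eq, hv, IsScalarTower.algebraMap_apply (𝓞 K) K L]
        ring
      rw [h7]
      exact hx.sub ((isIntegral_algebraMap).mul hαR)
    obtain ⟨u₀, hu₀⟩ := IsIntegrallyClosed.isIntegral_iff.mp
      ((isIntegral_algebraMap_iff (algebraMap K L).injective).mp huint)
    have hx_fin : x = algebraMap (𝓞 K) L u₀ + algebraMap (𝓞 K) L f * α := by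
      rw [hx_eq, hv, ← hu₀, IsScalarTower.algebraMap_apply (𝓞 K) K L,
        IsScalarTower.algebraMap_apply (𝓞 K) K L]
    rw [hx_fin]
    exact Subalgebra.add_mem _ (Subalgebra.algebraMap_mem _ u₀)
      (Subalgebra.mul_mem _ (Subalgebra.algebraMap_mem _ f)
        (Algebra.self_mem_adjoin_singleton (𝓞 K) α))
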